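/- Let k : (0,∞) → ℝ be nonnegative and locally integrable, and let λ > 0. Suppose s : [0,∞) → ℝ is continuous, nonnegative and nonincreasing, and satisfies the scalar resolvent equation s(t) + λ ∫₀ᵗ k(t−τ) s(τ) dτ = 1 for every t ≥ 0. Then for every t ≥ 0 one has s(t) ≤ 1 / (1 + λ ∫₀ᵗ k(τ) dτ). -/

import Mathlib

open MeasureTheory Set

/-- Scalar resolvent bound: if `s` is a continuous nonnegative nonincreasing solution of the
one-dimensional resolvent equation `s(t) + λ ∫₀ᵗ k(t-τ) s(τ) dτ = 1` with nonnegative locally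
integrable kernel `k` and `λ > 0`, then `s(t) ≤ 1 / (1 + λ ∫₀ᵗ k(τ) dτ)` for all `t ≥ 0`. -/
theorem stmt0 (k s : ℝ → ℝ) (lam : ℝ) (hlam : 0 < lam)
    (hk_nonneg : ∀ x ∈ Ioi (0:ℝ), 0 ≤ k x)
    (hk_loc : ∀ t > (0:ℝ), IntegrableOn k (Ioc 0 t) volume)
    (hs_cont : ContinuousOn s (Ici 0))
    (hs_nonneg : ∀ t ∈ Ici (0:ℝ), 0 ≤ s t)
    (hs_mono : AntitoneOn s (Ici 0))
    (hres : ∀ t ∈ Ici (0:ℝ), s t + lam * ∫ τ in (0:ℝ)..t, k (t - τ) * s τ = 1) :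
    ∀ t ∈ Ici (0:ℝ), s t ≤ 1 / (1 + lam * ∫ τ in (0:ℝ)..t, k τ) := by
  intro t ht
  rw [mem_Ici] at ht
  rcases ht.eq_or_lt with rfl | htpos
  · have h := hres 0 (by simp)
    simp at h ⊢
    linarith [h]
  -- t > 0
  set I : ℝ := ∫ τ in (0:ℝ)..t, k τ with hI_def
  have hkInt : IntegrableOn k (Ioc 0 t) volume := hk_loc t htpos
  have hI_nonneg : 0 ≤ I := by
    rw [hI_def, intervalIntegral.integral_of_le ht]
    exact setIntegral_nonneg measurableSet_Ioc (fun x hx => hk_nonneg x hx.1)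
  have hden : 0 < 1 + lam * I := by positivity
  -- change of variables
  have hcov : (∫ τ in (0:ℝ)..t, k (t - τ) * s τ) = ∫ u in (0:ℝ)..t, k u * s (t - u) := by
    have := intervalIntegral.integral_comp_sub_left (a := (0:ℝ)) (b := t)
      (fun u => k u * s (t - u)) t
    simp only [sub_sub_cancel, sub_zero, sub_self] at this
    exact this
  -- continuity of u ↦ s (t - u) on Icc 0 t
  have hcont2 : ContinuousOn (fun u => s (t - u)) (Ioc 0 t) := by
    apply hs_cont.comp ((continuous_const.sub continuous_id).continuousOn)
    intro u hu
    simp only [mem_Ici, id_eq, Pi.sub_apply]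
    linarith [hu.2]
  have hmeas2 : AEStronglyMeasurable (fun u => k u * s (t - u))
      (volume.restrict (Ioc 0 t)) :=
    hkInt.aestronglyMeasurable.mul
      (hcont2.aestronglyMeasurable measurableSet_Ioc)
  have hgInt : IntegrableOn (fun u => k u * s (t - u)) (Ioc 0 t) volume := by
    apply Integrable.mono (hkInt.const_mul (s 0)) hmeas2
    filter_upwards [ae_restrict_mem measurableSet_Ioc] with u hu
    have hk0 : 0 ≤ k u := hk_nonneg u hu.1
    have h1 : (0:ℝ) ≤ t - u := by linarith [hu.2]
    have h2 : s (t - u) ≤ s 0 := hs_mono (mem_Ici.mpr (le_refl (0:ℝ))) (mem_Ici.mpr h1) h1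
    have h3 : 0 ≤ s (t - u) := hs_nonneg _ h1
    have hs00 : 0 ≤ s 0 := hs_nonneg 0 (by simp)
    simp only [norm_mul, Real.norm_eq_abs]
    rw [abs_of_nonneg hk0, abs_of_nonneg h3, abs_of_nonneg hs00]
    nlinarith
  have hfInt : IntegrableOn (fun u => k u * s t) (Ioc 0 t) volume :=
    hkInt.mul_const (s t)
  have hmono : (∫ u in (0:ℝ)..t, k u * s t) ≤ ∫ u in (0:ℝ)..t, k u * s (t - u) := by
    rw [intervalIntegral.integral_of_le ht, intervalIntegral.integral_of_le ht]
    apply setIntegral_mono_on hfInt hgInt measurableSet_Ioc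
    intro u hu
    have hk0 : 0 ≤ k u := hk_nonneg u hu.1
    have h1 : (0:ℝ) ≤ t - u := by linarith [hu.2]
    have h2 : s t ≤ s (t - u) := hs_mono h1 ht (by linarith [hu.1])
    nlinarith
  have hleft : (∫ u in (0:ℝ)..t, k u * s t) = I * s t := by
    rw [hI_def, ← intervalIntegral.integral_mul_const]
  have hkey : s t * (1 + lam * I) ≤ 1 := by
    have h := hres t ht
    rw [hcov] at h
    have hst : 0 ≤ s t := hs_nonneg t ht
    nlinarith [hmono, hleft]
  rw [le_div_iff₀ hden]
  linarith [hkey]
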